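/- Let n_s ≥ 2, let Δs_0, …, Δs_{n_s-1} > 0, K_∥ > 0, γ ≥ 0, Δt > 0, and let N_t ∈ ℕ. Suppose (T_i^n)_{0≤i≤n_s-1, n∈ℕ} satisfies the implicit finite volume scheme (T_i^{n+1} − T_i^n)/Δt = (F_{i+1/2}^{n+1} − F_{i−1/2}^{n+1})/Δs_i, where for 0 ≤ i ≤ n_s−2, F_{i+1/2}^{n+1} = (4K_∥/7)·((T_{i+1}^{n+1})^{7/2} − (T_i^{n+1})^{7/2})/(Δs_{i+1} + Δs_i), and F_{−1/2}^{n+1} = γ T_0^{n+1}, F_{n_s−1/2}^{n+1} = −γ T_{n_s−1}^{n+1}, with 0 ≤ T_i^0 for all i. Then there exists a constant C > 0, depending only on the initial data (T_i^0)_i (and on K_∥, γ) but not on Δt, N_t or the mesh, such that Σ_{n=0}^{N_t} Σ_{i=0}^{n_s−2} Δt · [( (T_{i+1}^{n+1})^{7/2} − (T_i^{n+1})^{7/2} )²] / (Δs_i + Δs_{i+1}) ≤ C. -/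

import Mathlib

open Real Finset

lemma cos72 : Real.cos ((7:ℝ)/2 * π) = 0 := by
  have : (7:ℝ)/2 * π = -(π/2) + (2:ℤ) * (2 * π) := by push_cast; ring
  rw [this, Real.cos_add_int_mul_two_pi, Real.cos_neg, Real.cos_pi_div_two]

lemma cos92 : Real.cos ((9:ℝ)/2 * π) = 0 := by
  have : (9:ℝ)/2 * π = π/2 + (2:ℤ) * (2 * π) := by push_cast; ring
  rw [this, Real.cos_add_int_mul_two_pi, Real.cos_pi_div_two]

lemma p_neg {x : ℝ} (hx : x < 0) : x ^ ((7:ℝ)/2) = 0 := by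
  rw [Real.rpow_def_of_neg hx, cos72, mul_zero]

lemma q_neg {x : ℝ} (hx : x < 0) : x ^ ((9:ℝ)/2) = 0 := by
  rw [Real.rpow_def_of_neg hx, cos92, mul_zero]

lemma q_nonneg (x : ℝ) : 0 ≤ x ^ ((9:ℝ)/2) := by
  rcases le_or_gt 0 x with h | h
  · exact Real.rpow_nonneg h _
  · rw [q_neg h]

lemma xp_nonneg (x : ℝ) : 0 ≤ x * x ^ ((7:ℝ)/2) := by
  rcases le_or_gt 0 x with h | h
  · exact mul_nonneg h (Real.rpow_nonneg h _)
  · rw [p_neg h, mul_zero]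

lemma q_eq_mul_p {x : ℝ} (hx : 0 ≤ x) : x ^ ((9:ℝ)/2) = x * x ^ ((7:ℝ)/2) := by
  have h9 : (9:ℝ)/2 = 1 + (7:ℝ)/2 := by norm_num
  rw [h9, Real.rpow_one_add' hx (by norm_num)]

lemma key_convex (a b : ℝ) :
    a ^ ((9:ℝ)/2) - b ^ ((9:ℝ)/2) ≤ (9/2) * a ^ ((7:ℝ)/2) * (a - b) := by
  rcases lt_or_ge a 0 with ha | ha
  · rw [p_neg ha, q_neg ha]
    have := q_nonneg b
    nlinarith
  rcases eq_or_lt_of_le ha with ha0 | hapos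
  · rw [← ha0]
    rw [Real.zero_rpow (by norm_num), Real.zero_rpow (by norm_num)]
    have := q_nonneg b
    nlinarith
  rcases lt_or_ge b 0 with hb | hb
  · rw [q_neg hb]
    have hq : a ^ ((9:ℝ)/2) = a * a ^ ((7:ℝ)/2) := q_eq_mul_p ha
    have hp : 0 ≤ a ^ ((7:ℝ)/2) := Real.rpow_nonneg ha _
    nlinarith
  · set s := b / a - 1 with hs
    have hs1 : -1 ≤ s := by
      have : 0 ≤ b / a := div_nonneg hb ha
      simp [hs]; linarith
    have hB := one_add_mul_self_le_rpow_one_add hs1 (p := (9:ℝ)/2) (by norm_num)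
    have h1s : 1 + s = b / a := by ring
    rw [h1s] at hB
    have hdiv : (b / a) ^ ((9:ℝ)/2) = b ^ ((9:ℝ)/2) / a ^ ((9:ℝ)/2) :=
      Real.div_rpow hb ha _
    rw [hdiv] at hB
    have hqa : 0 < a ^ ((9:ℝ)/2) := Real.rpow_pos_of_pos hapos _
    have hmul := mul_le_mul_of_nonneg_right hB hqa.le
    rw [div_mul_cancel₀ _ hqa.ne'] at hmul
    have hq : a ^ ((9:ℝ)/2) = a * a ^ ((7:ℝ)/2) := q_eq_mul_p ha
    have hsa : a ^ ((9:ℝ)/2) * s = a ^ ((7:ℝ)/2) * (b - a) := by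
      rw [hq, hs]; field_simp
    nlinarith [hmul, hsa]

lemma abel_sum (F p : ℕ → ℝ) : ∀ m : ℕ, 1 ≤ m →
    ∑ i ∈ range m, (F (i+1) - F i) * p i
      = F m * p (m-1) - F 0 * p 0 - ∑ i ∈ range (m-1), F (i+1) * (p (i+1) - p i) := by
  intro m hm
  induction m with
  | zero => omega
  | succ k ih =>
    rcases Nat.eq_or_lt_of_le hm with h1 | h1
    · simp [← h1]
      ring
    · have hk : 1 ≤ k := by omega
      rw [Finset.sum_range_succ, ih hk]
      have h2 : k + 1 - 1 = k := rfl
      rw [h2, show k = (k-1) + 1 by omega, Finset.sum_range_succ,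
        show (k-1) + 1 = k by omega]
      ring


/-- Discrete semi-norm (gradient) estimate of Proposition 2.2 for the
backward Euler finite volume scheme for the 1D nonlinear heat equation:
there is a constant `C > 0` depending only on the initial data `T0`
(and on `K`, `γ`), but not on the time step `Δt`, on the number of time
iterations `Nt`, or on the particular solution, such that the discrete
semi-norm of `T^{7/2}` is bounded by `C`.
Here `F n i` denotes the numerical flux `F_{i-1/2}^n` computed from the
values at time level `n`. -/
theorem implicit_scheme_seminorm_estimate
    (ns : ℕ) (hns : 2 ≤ ns)
    (Δs : ℕ → ℝ) (hΔs : ∀ i < ns, 0 < Δs i)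
    (K γ : ℝ) (hK : 0 < K) (hγ : 0 ≤ γ)
    (T0 : ℕ → ℝ) (hT0 : ∀ i < ns, 0 ≤ T0 i) :
    ∃ C > (0:ℝ), ∀ (Δt : ℝ), 0 < Δt → ∀ (T F : ℕ → ℕ → ℝ),
      (∀ i < ns, T 0 i = T0 i) →
      (∀ n, F n 0 = γ * T n 0) →
      (∀ n, F n ns = -γ * T n (ns - 1)) →
      (∀ n i, 1 ≤ i → i ≤ ns - 1 →
        F n i = (4 * K / 7) *
          ((T n i) ^ ((7:ℝ)/2) - (T n (i-1)) ^ ((7:ℝ)/2))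
          / (Δs i + Δs (i-1))) →
      (∀ n, ∀ i < ns,
        (T (n+1) i - T n i) / Δt = (F (n+1) (i+1) - F (n+1) i) / Δs i) →
      ∀ Nt : ℕ,
        (∑ n ∈ Finset.range (Nt+1), ∑ i ∈ Finset.range (ns-1),
          Δt * ((T (n+1) (i+1)) ^ ((7:ℝ)/2) - (T (n+1) i) ^ ((7:ℝ)/2))^2
            / (Δs i + Δs (i+1))) ≤ C := by
  set S0 : ℝ := ∑ i ∈ Finset.range ns, Δs i * (T0 i) ^ ((9:ℝ)/2) with hS0def
  have hS0 : 0 ≤ S0 :=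
    Finset.sum_nonneg fun i hi =>
      mul_nonneg (hΔs i (Finset.mem_range.mp hi)).le (q_nonneg _)
  refine ⟨7/(18*K) * S0 + 1, by positivity, ?_⟩
  intro Δt hΔt T F hinit hF0 hFns hFint hsch Nt
  set S : ℕ → ℝ := fun n => ∑ i ∈ Finset.range ns, Δs i * (T n i) ^ ((9:ℝ)/2) with hS
  have hSnonneg : ∀ n, 0 ≤ S n := fun n =>
    Finset.sum_nonneg fun i hi =>
      mul_nonneg (hΔs i (Finset.mem_range.mp hi)).le (q_nonneg _)
  have hS0eq : S 0 = S0 := by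
    refine Finset.sum_congr rfl fun i hi => ?_
    rw [hinit i (Finset.mem_range.mp hi)]
  have key : ∀ n, (4*K/7) * (Δt * ∑ i ∈ Finset.range (ns-1),
      ((T (n+1) (i+1)) ^ ((7:ℝ)/2) - (T (n+1) i) ^ ((7:ℝ)/2))^2 / (Δs i + Δs (i+1)))
      ≤ (2/9) * (S n - S (n+1)) := by
    intro n
    set P : ℕ → ℝ := fun i => (T (n+1) i) ^ ((7:ℝ)/2) with hP
    set Q : ℝ := ∑ i ∈ Finset.range (ns-1), (P (i+1) - P i)^2 / (Δs i + Δs (i+1)) with hQ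
    have hsch' : ∀ i < ns, (T (n+1) i - T n i) * Δs i = (F (n+1) (i+1) - F (n+1) i) * Δt := by
      intro i hi
      have h := hsch n i hi
      rw [div_eq_div_iff hΔt.ne' (hΔs i hi).ne'] at h
      linarith
    have hsum1 : ∑ i ∈ Finset.range ns, (T (n+1) i - T n i) * P i * Δs i
        = Δt * ∑ i ∈ Finset.range ns, (F (n+1) (i+1) - F (n+1) i) * P i := by
      rw [Finset.mul_sum]
      refine Finset.sum_congr rfl fun i hi => ?_
      have h := hsch' i (Finset.mem_range.mp hi)
      calc (T (n+1) i - T n i) * P i * Δs i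
          = ((T (n+1) i - T n i) * Δs i) * P i := by ring
        _ = ((F (n+1) (i+1) - F (n+1) i) * Δt) * P i := by rw [h]
        _ = Δt * ((F (n+1) (i+1) - F (n+1) i) * P i) := by ring
    have habel := abel_sum (F (n+1)) P ns (by omega)
    have hint : ∑ i ∈ Finset.range (ns-1), F (n+1) (i+1) * (P (i+1) - P i)
        = (4*K/7) * Q := by
      rw [hQ, Finset.mul_sum]
      refine Finset.sum_congr rfl fun i hi => ?_
      have hi' := Finset.mem_range.mp hi
      rw [hFint (n+1) (i+1) (by omega) (by omega)]
      simp only [Nat.add_sub_cancel]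
      have hd : Δs (i+1) + Δs i ≠ 0 := by
        have h1 := hΔs i (by omega); have h2 := hΔs (i+1) (by omega); positivity
      have hd' : Δs i + Δs (i+1) ≠ 0 := by rw [add_comm] at hd; exact hd
      field_simp
      ring
    have hb1 : F (n+1) ns * P (ns-1) ≤ 0 := by
      rw [hFns]
      have h := xp_nonneg (T (n+1) (ns-1))
      have : -γ * T (n+1) (ns-1) * P (ns-1)
          = -(γ * (T (n+1) (ns-1) * (T (n+1) (ns-1)) ^ ((7:ℝ)/2))) := by
        rw [hP]; ring
      rw [this]
      exact neg_nonpos_of_nonneg (mul_nonneg hγ h)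
    have hb2 : 0 ≤ F (n+1) 0 * P 0 := by
      rw [hF0]
      have h := xp_nonneg (T (n+1) 0)
      have : γ * T (n+1) 0 * P 0
          = γ * (T (n+1) 0 * (T (n+1) 0) ^ ((7:ℝ)/2)) := by rw [hP]; ring
      rw [this]
      exact mul_nonneg hγ h
    have hchain : Δt * ((4*K/7) * Q) ≤ - ∑ i ∈ Finset.range ns, (T (n+1) i - T n i) * P i * Δs i := by
      rw [hsum1, habel, hint]
      have hb : F (n+1) ns * P (ns-1) - F (n+1) 0 * P 0 ≤ 0 := by linarith
      nlinarith [mul_nonpos_of_nonneg_of_nonpos hΔt.le hb]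
    have hconv : (2/9) * (S (n+1) - S n) ≤ ∑ i ∈ Finset.range ns, (T (n+1) i - T n i) * P i * Δs i := by
      rw [hS]
      simp only
      rw [← Finset.sum_sub_distrib, Finset.mul_sum]
      refine Finset.sum_le_sum fun i hi => ?_
      have hc := key_convex (T (n+1) i) (T n i)
      have hd := (hΔs i (Finset.mem_range.mp hi)).le
      have := mul_le_mul_of_nonneg_left hc hd
      rw [hP]
      nlinarith [this]
    have hfin : Δt * ∑ i ∈ Finset.range (ns-1),
        ((T (n+1) (i+1)) ^ ((7:ℝ)/2) - (T (n+1) i) ^ ((7:ℝ)/2))^2 / (Δs i + Δs (i+1))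
        = Δt * Q := by rw [hQ, hP]
    rw [hfin]
    nlinarith [hchain, hconv]
  have htel : ∑ n ∈ Finset.range (Nt+1), (S n - S (n+1)) = S 0 - S (Nt+1) :=
    Finset.sum_range_sub' S (Nt+1)
  have hsumkey : (4*K/7) * ∑ n ∈ Finset.range (Nt+1), (Δt * ∑ i ∈ Finset.range (ns-1),
      ((T (n+1) (i+1)) ^ ((7:ℝ)/2) - (T (n+1) i) ^ ((7:ℝ)/2))^2 / (Δs i + Δs (i+1)))
      ≤ (2/9) * S 0 := by
    rw [Finset.mul_sum]
    calc ∑ n ∈ Finset.range (Nt+1), (4*K/7) * (Δt * ∑ i ∈ Finset.range (ns-1),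
        ((T (n+1) (i+1)) ^ ((7:ℝ)/2) - (T (n+1) i) ^ ((7:ℝ)/2))^2 / (Δs i + Δs (i+1)))
        ≤ ∑ n ∈ Finset.range (Nt+1), (2/9) * (S n - S (n+1)) :=
          Finset.sum_le_sum fun n _ => key n
      _ = (2/9) * (S 0 - S (Nt+1)) := by rw [← Finset.mul_sum, htel]
      _ ≤ (2/9) * S 0 := by nlinarith [hSnonneg (Nt+1)]
  have hrw : ∀ n, ∑ i ∈ Finset.range (ns-1),
      Δt * ((T (n+1) (i+1)) ^ ((7:ℝ)/2) - (T (n+1) i) ^ ((7:ℝ)/2))^2 / (Δs i + Δs (i+1))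
      = Δt * ∑ i ∈ Finset.range (ns-1),
      ((T (n+1) (i+1)) ^ ((7:ℝ)/2) - (T (n+1) i) ^ ((7:ℝ)/2))^2 / (Δs i + Δs (i+1)) := by
    intro n
    rw [Finset.mul_sum]
    exact Finset.sum_congr rfl fun i _ => by rw [mul_div_assoc]
  calc (∑ n ∈ Finset.range (Nt+1), ∑ i ∈ Finset.range (ns-1),
        Δt * ((T (n+1) (i+1)) ^ ((7:ℝ)/2) - (T (n+1) i) ^ ((7:ℝ)/2))^2 / (Δs i + Δs (i+1)))
      = ∑ n ∈ Finset.range (Nt+1), (Δt * ∑ i ∈ Finset.range (ns-1),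
        ((T (n+1) (i+1)) ^ ((7:ℝ)/2) - (T (n+1) i) ^ ((7:ℝ)/2))^2 / (Δs i + Δs (i+1))) :=
        Finset.sum_congr rfl fun n _ => hrw n
    _ ≤ 7/(18*K) * S0 + 1 := by
        rw [hS0eq] at hsumkey
        set X := ∑ n ∈ Finset.range (Nt+1), (Δt * ∑ i ∈ Finset.range (ns-1),
          ((T (n+1) (i+1)) ^ ((7:ℝ)/2) - (T (n+1) i) ^ ((7:ℝ)/2))^2 / (Δs i + Δs (i+1))) with hX
        have hKne : K ≠ 0 := hK.ne'
        calc X = (7/(4*K)) * ((4*K/7) * X) := by field_simp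
          _ ≤ (7/(4*K)) * ((2/9) * S0) :=
              mul_le_mul_of_nonneg_left hsumkey (by positivity)
          _ = 7/(18*K) * S0 := by field_simp; ring
          _ ≤ 7/(18*K) * S0 + 1 := by linarith
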